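/- Let x be a real number with 0 < x ≤ 1/4, let u ∈ ℝ with |u| ≤ π/2, and let μ ∈ ℝ with |μ| ≤ πx/2. Then the first-order Taylor remainder of tan at μ with increment −x·u satisfies |tan(μ − x·u) − tan(μ) + x·u·sec²(μ)| ≤ π³·x³. -/

import Mathlib

open Real

private lemma sin_sub_mul_cos_bound_nonneg (t : ℝ) (h0 : 0 ≤ t) (h1 : t ≤ 1) :
    |Real.sin t - t * Real.cos t| ≤ t ^ 3 / 2 := by
  rcases eq_or_lt_of_le h0 with rfl | h0'
  · simp
  · have h2 : Real.sin t ≤ t := by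
      have := Real.abs_sin_le_abs (x := t)
      rw [abs_of_nonneg h0] at this
      exact (abs_le.1 this).2
    have h3 := Real.sin_gt_sub_cube h0'
    have h4 := Real.one_sub_sq_div_two_le_cos (x := t)
    have h5 := Real.cos_le_one t
    rw [abs_le]
    constructor <;> nlinarith

private lemma sin_sub_mul_cos_bound (t : ℝ) (ht : |t| ≤ 1) :
    |Real.sin t - t * Real.cos t| ≤ |t| ^ 3 / 2 := by
  rcases le_or_gt 0 t with h | h
  · rw [abs_of_nonneg h]
    exact sin_sub_mul_cos_bound_nonneg t h (by rwa [abs_of_nonneg h] at ht)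
  · have h0 : 0 ≤ -t := by linarith
    have := sin_sub_mul_cos_bound_nonneg (-t) h0 (by rwa [abs_of_neg h] at ht)
    rw [Real.sin_neg, Real.cos_neg] at this
    rw [abs_of_neg h]
    calc |Real.sin t - t * Real.cos t| = |-Real.sin t - -t * Real.cos t| := by
          rw [← abs_neg]; ring_nf
      _ ≤ (-t) ^ 3 / 2 := this
    

set_option maxHeartbeats 1600000 in
/-- Uniform bound on the first-order Taylor remainder of `tan` at `μ` with
increment `−x·u`: `|tan(μ − xu) − tan μ + xu·sec²μ| ≤ π³x³`. -/
theorem tan_taylor_remainder_bound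
    (x u μ : ℝ) (hx : 0 < x) (hx' : x ≤ 1/4)
    (hu : |u| ≤ π / 2) (hμ : |μ| ≤ π * x / 2) :
    |Real.tan (μ - x * u) - Real.tan μ + x * u * (1 / Real.cos μ)^2|
      ≤ π^3 * x^3 := by
  have hπ3 : (3.14 : ℝ) < π := by
    have := Real.pi_gt_d2; linarith
  have hπ4 : π < 3.15 := Real.pi_lt_d2
  set h := x * u with hh_def
  have hh : |h| ≤ π * x / 2 := by
    rw [hh_def, abs_mul, abs_of_pos hx]
    nlinarith
  have hHsmall : π * x / 2 ≤ π / 8 := by nlinarith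
  have hμ' : |μ| ≤ π / 8 := hμ.trans hHsmall
  have hh' : |h| ≤ π / 8 := hh.trans hHsmall
  have hsub : |μ - h| ≤ π / 4 := by
    calc |μ - h| ≤ |μ| + |h| := abs_sub _ _
      _ ≤ π / 4 := by linarith
  -- cosine lower bounds
  have hcosμ : Real.cos μ ≥ 0.9 := by
    have := Real.one_sub_sq_div_two_le_cos (x := μ)
    have h2 : μ ^ 2 ≤ (π / 8) ^ 2 := by
      rw [← sq_abs]; exact pow_le_pow_left₀ (abs_nonneg _) hμ' 2
    nlinarith
  have hcossub : Real.cos (μ - h) ≥ 0.6 := by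
    have := Real.one_sub_sq_div_two_le_cos (x := μ - h)
    have h2 : (μ - h) ^ 2 ≤ (π / 4) ^ 2 := by
      rw [← sq_abs]; exact pow_le_pow_left₀ (abs_nonneg _) hsub 2
    nlinarith
  have hcosμ0 : Real.cos μ ≠ 0 := by linarith
  have hcossub0 : Real.cos (μ - h) ≠ 0 := by linarith
  have identity : Real.tan (μ - h) - Real.tan μ + h * (1 / Real.cos μ) ^ 2
      = (h * Real.cos (μ - h) - Real.sin h * Real.cos μ)
        / (Real.cos (μ - h) * Real.cos μ ^ 2) := by
    have hc0 := hcossub0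
    rw [Real.tan_eq_sin_div_cos, Real.tan_eq_sin_div_cos]
    field_simp
    rw [Real.sin_sub, Real.cos_sub]
    linear_combination (-(Real.cos μ) * Real.sin h) * Real.sin_sq_add_cos_sq μ
  have hh1 : |h| ≤ 1 := by nlinarith [abs_nonneg h]
  have hN : |h * Real.cos (μ - h) - Real.sin h * Real.cos μ|
      ≤ 3 / 2 * (π * x / 2) ^ 3 := by
    have e : h * Real.cos (μ - h) - Real.sin h * Real.cos μ
        = Real.cos μ * (h * Real.cos h - Real.sin h) + h * Real.sin μ * Real.sin h := by
      rw [Real.cos_sub]; ring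
    rw [e]
    have b1 : |Real.sin h - h * Real.cos h| ≤ |h| ^ 3 / 2 := sin_sub_mul_cos_bound h hh1
    have b2 : |Real.sin μ| ≤ |μ| := Real.abs_sin_le_abs
    have b3 : |Real.sin h| ≤ |h| := Real.abs_sin_le_abs
    have b4 : |Real.cos μ| ≤ 1 := Real.abs_cos_le_one μ
    have hH0 : (0:ℝ) ≤ π * x / 2 := by positivity
    calc |Real.cos μ * (h * Real.cos h - Real.sin h) + h * Real.sin μ * Real.sin h|
        ≤ |Real.cos μ * (h * Real.cos h - Real.sin h)| + |h * Real.sin μ * Real.sin h| :=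
          abs_add_le _ _
      _ = |Real.cos μ| * |Real.sin h - h * Real.cos h| + |h| * |Real.sin μ| * |Real.sin h| := by
          rw [abs_mul, abs_mul, abs_mul, ← abs_neg (h * Real.cos h - Real.sin h)]; ring_nf
      _ ≤ 1 * (|h| ^ 3 / 2) + |h| * |μ| * |h| := by
          gcongr
      _ ≤ 1 * ((π * x / 2) ^ 3 / 2) + (π * x / 2) * (π * x / 2) * (π * x / 2) := by
          gcongr <;> first | exact hh | exact hμ | exact abs_nonneg _
      _ = 3 / 2 * (π * x / 2) ^ 3 := by ring
  have hDpos : (0:ℝ) < Real.cos (μ - h) * Real.cos μ ^ 2 := by nlinarith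
  rw [identity, abs_div, abs_of_pos hDpos, div_le_iff₀ hDpos]
  have hD : Real.cos (μ - h) * Real.cos μ ^ 2 ≥ 0.486 := by nlinarith
  have hH3 : (0:ℝ) ≤ (π * x / 2) ^ 3 := by positivity
  have key : (0:ℝ) ≤ (π * x / 2) ^ 3 * (Real.cos (μ - h) * Real.cos μ ^ 2 - 0.486) :=
    mul_nonneg hH3 (by linarith)
  have e8 : π ^ 3 * x ^ 3 = 8 * (π * x / 2) ^ 3 := by ring
  rw [e8]
  nlinarith [hN, key, hH3]
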